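/- Let F be a maximum matching of G, K = E(G)\F, and (Q,R,S) a Gallai–Edmonds decomposition with OR(K,F) = S ∪ ⋃_i(V(H_i)\{r_i}). Then an edge e on V(G) not in E(G) is enriching (i.e., OR(K ∪ {e}, F) strictly contains OR(K,F)) if and only if e connects V(H_i) to V(H_k) for distinct components i ≠ k, or connects some V(H_i) to Q. -/

import Mathlib

variable {V : Type*}

/-- A matching: a set of non-loop edges that are pairwise vertex-disjoint. -/
def IsMatching (M : Set (Sym2 V)) : Prop :=
  (∀ e ∈ M, ¬ e.IsDiag) ∧ ∀ e ∈ M, ∀ f ∈ M, e ≠ f → ∀ v, v ∈ e → v ∉ f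

/-- A vertex is covered by an edge set if it belongs to some edge. -/
def covered (M : Set (Sym2 V)) (v : V) : Prop := ∃ e ∈ M, v ∈ e

/-- A `K`–`F`-alternating path: a (simple) nonempty list of vertices whose
odd-numbered edges (0-indexed: even positions) lie in `K` and even-numbered edges lie in `F`. -/
def AltPath (K F : Set (Sym2 V)) (p : List V) : Prop :=
  p ≠ [] ∧ p.Nodup ∧ ∀ i, ∀ h : i + 1 < p.length,
    s(p[i]'(Nat.lt_of_succ_lt h), p[i+1]'h) ∈ (if i % 2 = 0 then K else F)


/-- `x` is evenly `K`-reachable from `a`: there is a `K`–`F`-alternating path from `a` to `x`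
with an even number of edges (an odd number of vertices); `x = a` via the empty path. -/
def evenReach (K F : Set (Sym2 V)) (a x : V) : Prop :=
  ∃ (p : List V) (hp : p ≠ []), AltPath K F p ∧ p.head hp = a ∧ p.getLast hp = x ∧
    Odd p.length

/-- `x` is oddly `K`-reachable from `a`: there is a `K`–`F`-alternating path from `a` to `x`
with an odd number of edges (an even, positive, number of vertices). -/
def oddReach (K F : Set (Sym2 V)) (a x : V) : Prop :=
  ∃ (p : List V) (hp : p ≠ []), AltPath K F p ∧ p.head hp = a ∧ p.getLast hp = x ∧
    Even p.length


/-- A maximum matching of the graph with edge set `E`. -/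
def IsMaxMatching (E F : Set (Sym2 V)) : Prop :=
  F ⊆ E ∧ IsMatching F ∧ ∀ M ⊆ E, IsMatching M → M.ncard ≤ F.ncard

/-- The edges of `F` contained in the vertex set `C` (the induced edge set `F[C]`). -/
def edgesIn (F : Set (Sym2 V)) (C : Set V) : Set (Sym2 V) := {e ∈ F | ∀ u ∈ e, u ∈ C}

/-- The edges of `E` avoiding the vertex set `S` (edges of `G − S`). -/
def avoid (E : Set (Sym2 V)) (S : Set V) : Set (Sym2 V) := {e ∈ E | ∀ u ∈ e, u ∉ S}

/-- The connected component of `v` in the graph with edge set `E'`. -/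
def comp (E' : Set (Sym2 V)) (v : V) : Set V :=
  {u | Relation.ReflTransGen (fun a b => s(a, b) ∈ E') v u}

/-- The induced subgraph on `C` is hypomatchable (factor-critical): for every `v ∈ C` there
is a matching inside `C` covering exactly `C \ {v}`. -/
def Hypomatchable (E : Set (Sym2 V)) (C : Set V) : Prop :=
  ∀ v ∈ C, ∃ M ⊆ edgesIn E C, IsMatching M ∧ ¬ covered M v ∧
    ∀ u ∈ C, u ≠ v → covered M u

/-- A Gallai–Edmonds decomposition `(Q, R, S)` of the graph `E` with respect to the maximum
matching `F`: (1) `F[Q]` is a perfect matching of `Q`; (2) `R` is a union of connected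
components of `G − S`, each hypomatchable and matched by `F` within itself except for exactly
one exposed vertex (its `r_i`); (3) every `s ∈ S` is matched by `F` to the exposed vertex
`r_i` of some component. -/
def IsGE (E F : Set (Sym2 V)) (Q R S : Set V) : Prop :=
  Q ∪ R ∪ S = Set.univ ∧ Disjoint Q R ∧ Disjoint Q S ∧ Disjoint R S ∧
  (∀ v ∈ Q, covered (edgesIn F Q) v) ∧
  (∀ v ∈ R, comp (avoid E S) v ⊆ R ∧ Hypomatchable E (comp (avoid E S) v) ∧
    (∃! w, w ∈ comp (avoid E S) v ∧ ¬ covered (edgesIn F (comp (avoid E S) v)) w)) ∧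
  (∀ s ∈ S, ∃ t, s(s, t) ∈ F ∧ t ∈ R ∧ ¬ covered (edgesIn F (comp (avoid E S) t)) t)

/-- `ER(K,F)`: the set of vertices evenly `K`-reachable from some `F`-uncovered vertex. -/
def ERset (K F : Set (Sym2 V)) : Set V := {x | ∃ a, ¬ covered F a ∧ evenReach K F a x}

/-- `OR(K,F)`: the set of vertices oddly `K`-reachable from some `F`-uncovered vertex. -/
def ORset (K F : Set (Sym2 V)) : Set V := {x | ∃ a, ¬ covered F a ∧ oddReach K F a x}

/-! ### Auxiliary infrastructure -/

section Infra

variable {V : Type*}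

lemma matching_unique {M : Set (Sym2 V)} (hM : IsMatching M) {w z1 z2 : V}
    (h1 : s(w, z1) ∈ M) (h2 : s(w, z2) ∈ M) : z1 = z2 := by
  by_cases h : s(w, z1) = s(w, z2)
  · rcases Sym2.eq_iff.mp h with ⟨-, h⟩ | ⟨h1', h2'⟩
    · exact h
    · exact h2'.trans h1'
  · have := hM.2 _ h1 _ h2 h w (by simp)
    simp at this

lemma matching_nonloop {M : Set (Sym2 V)} (hM : IsMatching M) {w z : V}
    (h1 : s(w, z) ∈ M) : w ≠ z := by
  intro h; subst h
  exact hM.1 _ h1 (Sym2.mk_isDiag_iff.mpr rfl)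

lemma sym2_comm {M : Set (Sym2 V)} {a b : V} (h : s(a, b) ∈ M) : s(b, a) ∈ M := by
  rwa [Sym2.eq_swap]

lemma covered_partner {M : Set (Sym2 V)} {w : V} (h : covered M w) : ∃ z, s(w, z) ∈ M := by
  obtain ⟨e, he, hwe⟩ := h
  obtain ⟨z, rfl⟩ := Sym2.mem_iff_exists.mp hwe
  exact ⟨z, he⟩

lemma covered_mono {M M' : Set (Sym2 V)} (h : M ⊆ M') {w : V} (hw : covered M w) :
    covered M' w := by
  obtain ⟨e, he, hwe⟩ := hw; exact ⟨e, h he, hwe⟩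

lemma matching_subset {M M' : Set (Sym2 V)} (hM : IsMatching M) (h : M' ⊆ M) :
    IsMatching M' :=
  ⟨fun e he => hM.1 e (h he), fun e he f hf hef v hv => hM.2 e (h he) f (h hf) hef v hv⟩

/-! #### comp lemmas -/

lemma comp_refl (E' : Set (Sym2 V)) (v : V) : v ∈ comp E' v := Relation.ReflTransGen.refl

lemma comp_step {E' : Set (Sym2 V)} {v w : V} (h : s(v, w) ∈ E') : w ∈ comp E' v :=
  Relation.ReflTransGen.single h

lemma comp_trans {E' : Set (Sym2 V)} {v w x : V} (h : w ∈ comp E' v) (h2 : x ∈ comp E' w) :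
    x ∈ comp E' v := Relation.ReflTransGen.trans h h2

lemma comp_symm {E' : Set (Sym2 V)} {v w : V} (h : w ∈ comp E' v) : v ∈ comp E' w := by
  have hsym : Symmetric (fun a b => s(a, b) ∈ E') := by
    intro a b hab; rwa [Sym2.eq_swap]
  exact (haveI : Std.Symm (fun a b => s(a, b) ∈ E') := ⟨fun a b hab => hsym hab⟩; Relation.ReflTransGen.symmetric (r := fun a b => s(a, b) ∈ E')).symm _ _ h

lemma comp_eq {E' : Set (Sym2 V)} {v w : V} (h : w ∈ comp E' v) : comp E' w = comp E' v :=
  Set.ext fun x => ⟨fun hx => comp_trans h hx, fun hx => comp_trans (comp_symm h) hx⟩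

/-! #### AltPath lemmas -/

lemma altPath_singleton (K F : Set (Sym2 V)) (a : V) : AltPath K F [a] :=
  ⟨by simp, by simp, fun i h => absurd h (by simp)⟩

lemma altPath_mono {K F K' F' : Set (Sym2 V)} (hK : K ⊆ K') (hF : F ⊆ F') {p : List V}
    (h : AltPath K F p) : AltPath K' F' p := by
  refine ⟨h.1, h.2.1, fun i hi => ?_⟩
  have := h.2.2 i hi
  split_ifs at this ⊢ with hc
  · exact hK this
  · exact hF this

lemma altPath_take {K F : Set (Sym2 V)} {p : List V} (h : AltPath K F p) {n : ℕ} (hn : 0 < n) :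
    AltPath K F (p.take n) := by
  refine ⟨?_, List.Nodup.sublist (List.take_sublist n p) h.2.1, ?_⟩
  · rw [Ne, List.take_eq_nil_iff]
    push_neg
    exact ⟨by omega, h.1⟩
  · intro i hi
    have hlen : (p.take n).length = min n p.length := List.length_take
    have hi' : i + 1 < p.length := by omega
    have := h.2.2 i hi'
    simpa [List.getElem_take] using this

lemma altPath_snoc {K F : Set (Sym2 V)} {p : List V} (h : AltPath K F p) {z : V}
    (hz : z ∉ p)
    (hedge : s(p.getLast h.1, z) ∈ (if (p.length - 1) % 2 = 0 then K else F)) :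
    AltPath K F (p ++ [z]) := by
  have hp := h.1
  have hlen : 0 < p.length := List.length_pos_iff.mpr hp
  refine ⟨by simp, ?_, ?_⟩
  · refine List.Nodup.append h.2.1 (List.nodup_singleton z) ?_
    intro a ha hb
    simp only [List.mem_singleton] at hb
    subst hb
    exact hz ha
  · intro i hi
    simp only [List.length_append, List.length_singleton] at hi
    by_cases hilt : i + 1 < p.length
    · have := h.2.2 i hilt
      rw [List.getElem_append_left (by omega), List.getElem_append_left hilt]
      exact this
    · have hieq : i = p.length - 1 := by omega
      have h1 : (p ++ [z])[i]'(by simp; omega) = p[i]'(by omega) :=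
        List.getElem_append_left (by omega)
      have h2 : (p ++ [z])[i+1]'(by simp; omega) = z := by
        rw [List.getElem_append_right (by omega)]
        simp only [List.length_singleton, List.getElem_singleton]
      rw [h1, h2]
      subst hieq
      rw [← List.getLast_eq_getElem hp]
      exact hedge

lemma altPath_reverse {K F : Set (Sym2 V)} {p : List V} (h : AltPath K F p)
    (hl : p.length % 2 = 1) : AltPath F K p.reverse := by
  refine ⟨by simp [h.1], by simp [h.2.1], ?_⟩
  intro i hi
  simp only [List.length_reverse] at hi
  have h1 : p.reverse[i]'(by simp; omega) = p[p.length - 1 - i]'(by omega) :=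
    List.getElem_reverse _
  have h2 : p.reverse[i+1]'(by simp; omega) = p[p.length - 1 - (i+1)]'(by omega) :=
    List.getElem_reverse _
  rw [h1, h2]
  have hj : p.length - 1 - (i + 1) + 1 = p.length - 1 - i := by omega
  have := h.2.2 (p.length - 1 - (i+1)) (by omega)
  simp only [hj] at this
  rw [Sym2.eq_swap]
  by_cases hc : i % 2 = 0
  · rw [if_pos hc]
    rw [if_neg (by omega)] at this
    exact this
  · rw [if_neg hc]
    rw [if_pos (by omega)] at this
    exact this

lemma altPath_append_gen {K F : Set (Sym2 V)} {p q : List V} (hp : AltPath K F p)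
    (hq0 : q ≠ []) (hqnd : q.Nodup)
    (hjunc : q.head hq0 = p.getLast hp.1)
    (hdisj : ∀ x ∈ q.tail, x ∉ p)
    (hqe : ∀ j, ∀ hj : j + 1 < q.length,
      s(q[j]'(Nat.lt_of_succ_lt hj), q[j+1]'hj) ∈
        (if (j + (p.length - 1)) % 2 = 0 then K else F)) :
    AltPath K F (p ++ q.tail) := by
  have hp0 := hp.1
  have hplen : 0 < p.length := List.length_pos_iff.mpr hp0
  have hqlen : 0 < q.length := List.length_pos_iff.mpr hq0
  have htl : q.tail.length = q.length - 1 := List.length_tail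
  refine ⟨by simp [hp0], ?_, ?_⟩
  · refine List.Nodup.append hp.2.1 (List.Nodup.sublist (List.tail_sublist q) hqnd) ?_
    intro a hap haq
    exact hdisj a haq hap
  · intro t ht
    simp only [List.length_append, htl] at ht
    by_cases h1 : t + 1 < p.length
    · have := hp.2.2 t h1
      rw [List.getElem_append_left (by omega), List.getElem_append_left h1]
      exact this
    · by_cases h2 : t + 1 = p.length
      · have hq2 : 1 < q.length := by omega
        have e1 : (p ++ q.tail)[t]'(by simp [htl]; omega) = p[t]'(by omega) :=
          List.getElem_append_left (by omega)
        have e2 : (p ++ q.tail)[t+1]'(by simp [htl]; omega) = q[1]'(by omega) := by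
          rw [List.getElem_append_right (by omega)]
          rw [List.getElem_tail]
          congr 1
          omega
        have e3 : p[t]'(by omega) = q[0]'(by omega) := by
          rw [← List.head_eq_getElem_zero hq0, hjunc, List.getLast_eq_getElem]
          congr 1
          omega
        rw [e1, e2, e3]
        have := hqe 0 (by omega)
        by_cases hc : t % 2 = 0
        · rw [if_pos hc]
          rw [if_pos (by omega)] at this
          exact this
        · rw [if_neg hc]
          rw [if_neg (by omega)] at this
          exact this
      · have h3 : p.length ≤ t := by omega
        have e1 : (p ++ q.tail)[t]'(by simp [htl]; omega) = q[t - p.length + 1]'(by omega) := by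
          rw [List.getElem_append_right h3, List.getElem_tail]
        have e2 : (p ++ q.tail)[t+1]'(by simp [htl]; omega) =
            q[t - p.length + 1 + 1]'(by omega) := by
          rw [List.getElem_append_right (by omega), List.getElem_tail]
          congr 1
          omega
        rw [e1, e2]
        have := hqe (t - p.length + 1) (by omega)
        by_cases hc : t % 2 = 0
        · rw [if_pos hc]
          rw [if_pos (by omega)] at this
          exact this
        · rw [if_neg hc]
          rw [if_neg (by omega)] at this
          exact this

lemma append_tail_getLast {p q : List V} (hp : p ≠ []) (hq : q ≠ [])
    (hj : q.head hq = p.getLast hp) :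
    (p ++ q.tail).getLast (by simp [hp]) = q.getLast hq := by
  by_cases ht : q.tail = []
  · have hq1 : q.length = 1 := by
      have h5 := List.length_tail (l := q)
      rw [ht] at h5
      have h6 : 0 < q.length := List.length_pos_iff.mpr hq
      simp at h5
      omega
    obtain ⟨a, rfl⟩ := List.length_eq_one_iff.mp hq1
    simp only [List.head_cons] at hj
    simp [hj]
  · rw [List.getLast_append_of_ne_nil _ ht, List.getLast_tail]

lemma append_tail_head {p q : List V} (hp : p ≠ []) :
    (p ++ q).head (by simp [hp]) = p.head hp := List.head_append_left hp

lemma mem_append_tail {p q : List V} {x : V} (hx : x ∈ p ++ q.tail) : x ∈ p ∨ x ∈ q := by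
  rcases List.mem_append.mp hx with h | h
  · exact Or.inl h
  · exact Or.inr (List.mem_of_mem_tail h)

end Infra


section Structure

variable {V : Type*} {E F : Set (Sym2 V)} {Q R S : Set V}

lemma edgesIn_subset (F : Set (Sym2 V)) (C : Set V) : edgesIn F C ⊆ F := fun _ he => he.1

lemma ge_cases (hGE : IsGE E F Q R S) (x : V) : x ∈ Q ∨ x ∈ R ∨ x ∈ S := by
  have hx : x ∈ Q ∪ R ∪ S := hGE.1 ▸ Set.mem_univ x
  rcases hx with (h | h) | h
  exacts [Or.inl h, Or.inr (Or.inl h), Or.inr (Or.inr h)]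

lemma ge_S_covered (hGE : IsGE E F Q R S) {s' : V} (hs : s' ∈ S) : covered F s' := by
  obtain ⟨t, ht, -, -⟩ := hGE.2.2.2.2.2.2 s' hs
  exact ⟨s(s', t), ht, by simp⟩

lemma ge_Q_covered (hGE : IsGE E F Q R S) {x : V} (hx : x ∈ Q) : covered F x :=
  covered_mono (edgesIn_subset F Q) (hGE.2.2.2.2.1 x hx)

lemma ge_exposed_R (hGE : IsGE E F Q R S) {a : V} (ha : ¬ covered F a) : a ∈ R := by
  rcases ge_cases hGE a with h | h | h
  · exact absurd (ge_Q_covered hGE h) ha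
  · exact h
  · exact absurd (ge_S_covered hGE h) ha

lemma ge_comp_subset (hGE : IsGE E F Q R S) {w : V} (hw : w ∈ R) :
    comp (avoid E S) w ⊆ R := (hGE.2.2.2.2.2.1 w hw).1

lemma ge_step (hGE : IsGE E F Q R S) {w z : V} (hw : w ∈ R) (he : s(w, z) ∈ E) :
    z ∈ S ∨ z ∈ comp (avoid E S) w := by
  by_cases hz : z ∈ S
  · exact Or.inl hz
  · refine Or.inr (comp_step ⟨he, ?_⟩)
    intro x hx
    rcases Sym2.mem_iff.mp hx with rfl | rfl
    · exact Set.disjoint_left.mp hGE.2.2.2.1 hw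
    · exact hz

lemma ge_S_partner (hGE : IsGE E F Q R S) (hFm : IsMatching F) {s' z : V}
    (hs : s' ∈ S) (hz : s(s', z) ∈ F) :
    z ∈ R ∧ ¬ covered (edgesIn F (comp (avoid E S) z)) z := by
  obtain ⟨t, ht, htR, htc⟩ := hGE.2.2.2.2.2.2 s' hs
  have hzt : z = t := matching_unique hFm hz ht
  subst hzt
  exact ⟨htR, htc⟩

lemma ge_Q_partner (hGE : IsGE E F Q R S) (hFm : IsMatching F) {x z : V}
    (hx : x ∈ Q) (hz : s(x, z) ∈ F) : z ∈ Q := by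
  obtain ⟨e, he, hxe⟩ := hGE.2.2.2.2.1 x hx
  obtain ⟨z0, rfl⟩ := Sym2.mem_iff_exists.mp hxe
  have : z = z0 := matching_unique hFm hz he.1
  subst this
  exact he.2 z (by simp)

lemma ge_Rcov_partner (hGE : IsGE E F Q R S) (hFm : IsMatching F) {w z : V}
    (hw : w ∈ R) (hc : covered (edgesIn F (comp (avoid E S) w)) w) (hz : s(w, z) ∈ F) :
    z ∈ comp (avoid E S) w ∧ covered (edgesIn F (comp (avoid E S) z)) z := by
  obtain ⟨e, he, hwe⟩ := hc
  obtain ⟨z0, rfl⟩ := Sym2.mem_iff_exists.mp hwe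
  have hz0c : z0 ∈ comp (avoid E S) w := he.2 z0 (by simp)
  have : z = z0 := matching_unique hFm hz he.1
  subst this
  refine ⟨hz0c, ⟨s(w, z), ?_, by simp⟩⟩
  rw [comp_eq hz0c]
  exact he

lemma ge_unique_unc (hGE : IsGE E F Q R S) {w x y : V} (hw : w ∈ R)
    (hx : x ∈ comp (avoid E S) w) (hy : y ∈ comp (avoid E S) w)
    (hxu : ¬ covered (edgesIn F (comp (avoid E S) x)) x)
    (hyu : ¬ covered (edgesIn F (comp (avoid E S) y)) y) : x = y := by
  obtain ⟨r0, hr0, hr0u⟩ := (hGE.2.2.2.2.2.1 w hw).2.2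
  have ex : x = r0 := hr0u x ⟨hx, comp_eq hx ▸ hxu⟩
  have ey : y = r0 := hr0u y ⟨hy, comp_eq hy ▸ hyu⟩
  rw [ex, ey]

lemma ge_covered_of_ne (hGE : IsGE E F Q R S) {w x r0 : V} (hw : w ∈ R)
    (hx : x ∈ comp (avoid E S) w) (hr0 : r0 ∈ comp (avoid E S) w)
    (hr0u : ¬ covered (edgesIn F (comp (avoid E S) r0)) r0)
    (hne : x ≠ r0) : covered (edgesIn F (comp (avoid E S) x)) x := by
  by_contra h
  exact hne (ge_unique_unc hGE hw hx hr0 h hr0u)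

/-- The master structural invariant for alternating paths starting at an exposed
vertex, where the "matching-complement" edge set `K''` only connects `R` to `S` or
within components. -/
theorem master (hFm : IsMatching F) (hGE : IsGE E F Q R S) {K'' : Set (Sym2 V)}
    (hK'' : ∀ w z : V, s(w, z) ∈ K'' → w ∈ R → z ∈ S ∨ z ∈ comp (avoid E S) w)
    {p : List V} (hp : AltPath K'' F p) (ha : ¬ covered F (p.head hp.1)) :
    ∀ i, ∀ hi : i < p.length,
      p[i]'hi ∉ Q ∧ (p[i]'hi ∈ S → i % 2 = 1) ∧
      (i % 2 = 1 → p[i]'hi ∈ R →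
        covered (edgesIn F (comp (avoid E S) (p[i]'hi))) (p[i]'hi)) ∧
      (p[i]'hi ∈ R → ∃ j, ∃ hj : j < p.length, j ≤ i ∧ j % 2 = 0 ∧
        p[j]'hj ∈ comp (avoid E S) (p[i]'hi) ∧
        ¬ covered (edgesIn F (comp (avoid E S) (p[j]'hj))) (p[j]'hj)) := by
  intro i
  induction i with
  | zero =>
    intro hi
    have h0 : p[0]'hi = p.head hp.1 := (List.head_eq_getElem_zero hp.1).symm
    rw [h0]
    refine ⟨?_, ?_, ?_, ?_⟩
    · intro hQ; exact ha (ge_Q_covered hGE hQ)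
    · intro hS; exact absurd (ge_S_covered hGE hS) ha
    · intro h; exact absurd h (by omega)
    · intro _
      refine ⟨0, hi, le_refl 0, by omega, ?_, ?_⟩
      · rw [h0]; exact comp_refl _ _
      · rw [h0]; intro h; exact ha (covered_mono (edgesIn_subset _ _) h)
  | succ i ih =>
    intro hi
    have hi' : i < p.length := by omega
    obtain ⟨ihA, ihB, ihC, ihD⟩ := ih hi'
    have he := hp.2.2 i hi
    by_cases hpar : i % 2 = 0
    · rw [if_pos hpar] at he
      have hwS : p[i]'hi' ∉ S := fun h => by have := ihB h; omega
      have hwR : p[i]'hi' ∈ R := by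
        rcases ge_cases hGE (p[i]'hi') with h | h | h
        · exact absurd h ihA
        · exact h
        · exact absurd h hwS
      rcases hK'' _ _ he hwR with hxS | hxc
      · refine ⟨?_, ?_, ?_, ?_⟩
        · intro hQ; exact Set.disjoint_left.mp hGE.2.2.1 hQ hxS
        · intro _; omega
        · intro _ hxR; exact (Set.disjoint_left.mp hGE.2.2.2.1 hxR hxS).elim
        · intro hxR; exact (Set.disjoint_left.mp hGE.2.2.2.1 hxR hxS).elim
      · have hxR : p[i+1]'hi ∈ R := ge_comp_subset hGE hwR hxc
        have hcompx : comp (avoid E S) (p[i+1]'hi) = comp (avoid E S) (p[i]'hi') :=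
          comp_eq hxc
        obtain ⟨j, hj, hji, hjpar, hjc, hju⟩ := ihD hwR
        refine ⟨?_, ?_, ?_, ?_⟩
        · intro hQ; exact Set.disjoint_left.mp hGE.2.1 hQ hxR
        · intro hS; exact (Set.disjoint_left.mp hGE.2.2.2.1 hxR hS).elim
        · intro _ _
          by_contra hxu
          have hjc' : p[j]'hj ∈ comp (avoid E S) (p[i]'hi') := hjc
          have hxy : p[i+1]'hi = p[j]'hj :=
            ge_unique_unc hGE hwR hxc hjc' hxu hju
          have := (hp.2.1.getElem_inj_iff).mp hxy
          omega
        · intro _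
          exact ⟨j, hj, by omega, hjpar, by rw [hcompx]; exact hjc, hju⟩
    · rw [if_neg hpar] at he
      rcases ge_cases hGE (p[i]'hi') with hwQ | hwR | hwS
      · exact absurd hwQ ihA
      · have hwcov := ihC (by omega) hwR
        obtain ⟨hxc, hxcov⟩ := ge_Rcov_partner hGE hFm hwR hwcov he
        have hxR : p[i+1]'hi ∈ R := ge_comp_subset hGE hwR hxc
        have hcompx : comp (avoid E S) (p[i+1]'hi) = comp (avoid E S) (p[i]'hi') :=
          comp_eq hxc
        obtain ⟨j, hj, hji, hjpar, hjc, hju⟩ := ihD hwR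
        refine ⟨?_, ?_, ?_, ?_⟩
        · intro hQ; exact Set.disjoint_left.mp hGE.2.1 hQ hxR
        · intro hS; exact (Set.disjoint_left.mp hGE.2.2.2.1 hxR hS).elim
        · intro h; exact absurd h (by omega)
        · intro _
          exact ⟨j, hj, by omega, hjpar, by rw [hcompx]; exact hjc, hju⟩
      · obtain ⟨hxR, hxunc⟩ := ge_S_partner hGE hFm hwS he
        refine ⟨?_, ?_, ?_, ?_⟩
        · intro hQ; exact Set.disjoint_left.mp hGE.2.1 hQ hxR
        · intro hS; exact (Set.disjoint_left.mp hGE.2.2.2.1 hxR hS).elim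
        · intro h; exact absurd h (by omega)
        · intro _
          exact ⟨i + 1, hi, le_refl _, by omega, comp_refl _ _, hxunc⟩

end Structure


section Walk

variable {V : Type*} {c : Set V} {M N : Set (Sym2 V)} {r t : V}

lemma head_not_mem_tail {q : List V} (hnd : q.Nodup) (hq : q ≠ []) : q.head hq ∉ q.tail := by
  have := hnd
  rw [← List.cons_head_tail hq] at this
  exact (List.nodup_cons.mp this).1

lemma walk_extend (hM : IsMatching M) (hN : IsMatching N)
    (hMc : ∀ e ∈ M, ∀ x ∈ e, x ∈ c) (hNc : ∀ e ∈ N, ∀ x ∈ e, x ∈ c)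
    (hMcov : ∀ x ∈ c, x ≠ t → covered M x) (hMt : ¬ covered M t)
    (hNr : ¬ covered N r)
    (hNcov : ∀ x ∈ c, x ≠ r → covered N x)
    {q : List V} (hq : AltPath (M \ N) (N \ M) q) (hhead : q.head hq.1 = r)
    (hcq : ∀ x ∈ q, x ∈ c) (hlen : q.length % 2 = 1)
    (hlast : q.getLast hq.1 ≠ t) :
    ∃ q' : List V, ∃ hq' : AltPath (M \ N) (N \ M) q',
      q'.head hq'.1 = r ∧ (∀ x ∈ q', x ∈ c) ∧ q'.length = q.length + 2 := by
  have hq0 := hq.1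
  have hqlen : 0 < q.length := List.length_pos_iff.mpr hq0
  have hndq := hq.2.1
  have hwc : q.getLast hq0 ∈ c := hcq _ (List.getLast_mem hq0)
  obtain ⟨z, hz⟩ := covered_partner (hMcov _ hwc hlast)
  have hzw : q.getLast hq0 ≠ z := matching_nonloop hM hz
  have hwl : q[q.length - 1]'(by omega) = q.getLast hq0 :=
    (List.getLast_eq_getElem hq0).symm
  -- the M-edge to z is not an N-edge
  have hfn : s(q.getLast hq0, z) ∉ N := by
    intro hin
    by_cases h1 : q.length = 1
    · obtain ⟨a, rfl⟩ := List.length_eq_one_iff.mp h1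
      simp only [List.getLast_singleton] at hz hin
      simp only [List.head_cons] at hhead
      subst hhead
      exact hNr ⟨_, hin, by simp⟩
    · have h3 : q.length - 2 + 1 < q.length := by omega
      have hedge := hq.2.2 (q.length - 2) h3
      rw [if_neg (by omega)] at hedge
      have h4 : q.length - 2 + 1 = q.length - 1 := by omega
      simp only [h4] at hedge
      rw [hwl] at hedge
      have h5 : z = q[q.length - 2]'(by omega) :=
        matching_unique hN hin (sym2_comm hedge.1)
      rw [h5, Sym2.eq_swap] at hz
      exact hedge.2 hz
  -- z is a fresh vertex
  have hzq : z ∉ q := by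
    intro hmem
    obtain ⟨i, hilt, hiz⟩ := List.mem_iff_getElem.mp hmem
    by_cases hi1 : i = q.length - 1
    · subst hi1
      rw [hwl] at hiz
      exact hzw hiz
    · by_cases hipar : i % 2 = 1
      · have h3 : i - 1 + 1 < q.length := by omega
        have hedge := hq.2.2 (i - 1) h3
        rw [if_pos (by omega)] at hedge
        have h4 : i - 1 + 1 = i := by omega
        simp only [h4] at hedge
        rw [hiz] at hedge
        have h5 : q[i-1]'(by omega) = q.getLast hq0 :=
          matching_unique hM (sym2_comm hedge.1) (sym2_comm hz)
        have := (hndq.getElem_inj_iff).mp (h5.trans hwl.symm)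
        omega
      · have h3 : i + 1 < q.length := by omega
        have hedge := hq.2.2 i h3
        rw [if_pos (by omega)] at hedge
        rw [hiz] at hedge
        have h5 : q[i+1]'(by omega) = q.getLast hq0 :=
          matching_unique hM hedge.1 (sym2_comm hz)
        have := (hndq.getElem_inj_iff).mp (h5.trans hwl.symm)
        omega
  have hzc : z ∈ c := hMc _ hz z (by simp)
  have hzr : z ≠ r := by
    intro h
    subst h
    exact hzq (hhead ▸ List.head_mem hq0)
  -- append z
  have hq1 : AltPath (M \ N) (N \ M) (q ++ [z]) := by
    refine altPath_snoc hq hzq ?_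
    rw [if_pos (by omega)]
    exact ⟨hz, hfn⟩
  have hq10 : (q ++ [z]) ≠ [] := by simp
  have hgl1 : (q ++ [z]).getLast hq10 = z := by
    rw [List.getLast_append_of_ne_nil _ (by simp)]
    simp
  have hl1 : (q ++ [z]).length = q.length + 1 := by simp
  -- N-edge at z
  obtain ⟨y0, hg⟩ := covered_partner (hNcov z hzc hzr)
  have hy0z : z ≠ y0 := matching_nonloop hN hg
  have hgnm : s(z, y0) ∉ M := by
    intro hgm
    have h5 : y0 = q.getLast hq0 :=
      matching_unique hM hgm (sym2_comm hz)
    rw [h5] at hg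
    exact hfn (sym2_comm hg)
  have hzl1 : (q ++ [z])[(q++[z]).length - 1]'(by simp) = z := by
    rw [← List.getLast_eq_getElem]
    exact hgl1
  have hy0q1 : y0 ∉ q ++ [z] := by
    intro hmem
    obtain ⟨i, hilt, hiz⟩ := List.mem_iff_getElem.mp hmem
    rw [hl1] at hilt
    by_cases hi1 : i = q.length
    · subst hi1
      have : (q ++ [z])[q.length]'(by simp) = z := by
        rw [List.getElem_append_right (le_refl _)]
        simp
      rw [this] at hiz
      exact hy0z hiz
    · by_cases hi0 : i = 0
      · subst hi0
        have : (q ++ [z])[0]'(by simp [hqlen]) = r := by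
          rw [List.getElem_append_left hqlen]
          rw [← List.head_eq_getElem_zero hq0]
          exact hhead
        rw [this] at hiz
        exact hNr ⟨_, hg, by rw [← hiz]; simp⟩
      · by_cases hipar : i % 2 = 0
        · have h3 : i - 1 + 1 < (q ++ [z]).length := by simp; omega
          have hedge := hq1.2.2 (i - 1) h3
          rw [if_neg (by omega)] at hedge
          have h4 : i - 1 + 1 = i := by omega
          simp only [h4] at hedge
          rw [hiz] at hedge
          have h5 : (q ++ [z])[i-1]'(by simp; omega) = z :=
            matching_unique hN (sym2_comm hedge.1) (sym2_comm hg)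
          have := (hq1.2.1.getElem_inj_iff).mp (h5.trans hzl1.symm)
          simp only [List.length_append, List.length_singleton] at this
          omega
        · have h3 : i + 1 < (q ++ [z]).length := by simp; omega
          have hedge := hq1.2.2 i h3
          rw [if_neg (by omega)] at hedge
          rw [hiz] at hedge
          have h5 : (q ++ [z])[i+1]'(by simp; omega) = z :=
            matching_unique hN hedge.1 (sym2_comm hg)
          have := (hq1.2.1.getElem_inj_iff).mp (h5.trans hzl1.symm)
          simp only [List.length_append, List.length_singleton] at this
          omega
  have hq2 : AltPath (M \ N) (N \ M) ((q ++ [z]) ++ [y0]) := by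
    refine altPath_snoc hq1 hy0q1 ?_
    rw [hgl1, if_neg (by simp; omega)]
    exact ⟨hg, hgnm⟩
  refine ⟨(q ++ [z]) ++ [y0], hq2, ?_, ?_, by simp⟩
  · rw [List.head_append_left (by simp), List.head_append_left hq0]
    exact hhead
  · intro x hx
    rcases List.mem_append.mp hx with hx | hx
    · rcases List.mem_append.mp hx with hx | hx
      · exact hcq x hx
      · simp only [List.mem_singleton] at hx
        subst hx; exact hzc
    · simp only [List.mem_singleton] at hx
      subst hx
      exact hNc _ hg _ (by simp)

lemma walk [Fintype V] (hM : IsMatching M) (hN : IsMatching N)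
    (hMc : ∀ e ∈ M, ∀ x ∈ e, x ∈ c) (hNc : ∀ e ∈ N, ∀ x ∈ e, x ∈ c)
    (hMcov : ∀ x ∈ c, x ≠ t → covered M x) (hMt : ¬ covered M t)
    (hNr : ¬ covered N r)
    (hNcov : ∀ x ∈ c, x ≠ r → covered N x) (hrc : r ∈ c) :
    ∃ q : List V, ∃ hq : AltPath (M \ N) (N \ M) q,
      q.head hq.1 = r ∧ q.getLast hq.1 = t ∧ q.length % 2 = 1 ∧ ∀ x ∈ q, x ∈ c := by
  suffices h : ∀ n (q : List V) (hq : AltPath (M \ N) (N \ M) q),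
      q.head hq.1 = r → (∀ x ∈ q, x ∈ c) → q.length % 2 = 1 →
      Fintype.card V ≤ q.length + n →
      ∃ q' : List V, ∃ hq' : AltPath (M \ N) (N \ M) q',
        q'.head hq'.1 = r ∧ q'.getLast hq'.1 = t ∧ q'.length % 2 = 1 ∧ ∀ x ∈ q', x ∈ c by
    exact h (Fintype.card V) [r] (altPath_singleton _ _ r) rfl
      (by intro x hx; simp at hx; subst hx; exact hrc) (by simp) (by simp)
  intro n
  induction n with
  | zero =>
    intro q hq hh hcq hl hcard
    by_cases ht' : q.getLast hq.1 = t
    · exact ⟨q, hq, hh, ht', hl, hcq⟩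
    · obtain ⟨q', hq', -, -, hlen'⟩ :=
        walk_extend hM hN hMc hNc hMcov hMt hNr hNcov hq hh hcq hl ht'
      have := hq'.2.1.length_le_card
      omega
  | succ n ih =>
    intro q hq hh hcq hl hcard
    by_cases ht' : q.getLast hq.1 = t
    · exact ⟨q, hq, hh, ht', hl, hcq⟩
    · obtain ⟨q', hq', hh', hcq', hlen'⟩ :=
        walk_extend hM hN hMc hNc hMcov hMt hNr hNcov hq hh hcq hl ht'
      exact ih q' hq' hh' hcq' (by omega) (by omega)

end Walk


section Reach

variable {V : Type*} {E F : Set (Sym2 V)} {Q R S : Set V}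

lemma pureK_hyp (hGE : IsGE E F Q R S) :
    ∀ a b : V, s(a, b) ∈ E \ F → a ∈ R → b ∈ S ∨ b ∈ comp (avoid E S) a :=
  fun _ _ h ha => ge_step hGE ha h.1

lemma comp_even_path [Fintype V] (hFm : IsMatching F) (hGE : IsGE E F Q R S)
    {u0 t r : V} (hu : u0 ∈ R) (ht : t ∈ comp (avoid E S) u0)
    (hr : r ∈ comp (avoid E S) u0)
    (hru : ¬ covered (edgesIn F (comp (avoid E S) r)) r) :
    ∃ q : List V, ∃ hq : AltPath (E \ F) F q,
      q.head hq.1 = r ∧ q.getLast hq.1 = t ∧ q.length % 2 = 1 ∧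
      ∀ x ∈ q, x ∈ comp (avoid E S) u0 := by
  obtain ⟨M, hMsub, hMm, hMt, hMcov⟩ := (hGE.2.2.2.2.2.1 u0 hu).2.1 t ht
  have hNm : IsMatching (edgesIn F (comp (avoid E S) u0)) :=
    matching_subset hFm (edgesIn_subset F _)
  have hNc : ∀ e ∈ edgesIn F (comp (avoid E S) u0), ∀ x ∈ e, x ∈ comp (avoid E S) u0 :=
    fun e he x hx => he.2 x hx
  have hMc : ∀ e ∈ M, ∀ x ∈ e, x ∈ comp (avoid E S) u0 :=
    fun e he x hx => (hMsub he).2 x hx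
  have hNr : ¬ covered (edgesIn F (comp (avoid E S) u0)) r := by
    intro h
    exact hru (by rwa [comp_eq hr])
  have hNcov : ∀ x ∈ comp (avoid E S) u0, x ≠ r →
      covered (edgesIn F (comp (avoid E S) u0)) x := by
    intro x hx hxr
    have h2 := ge_covered_of_ne hGE hu hx hr hru hxr
    rwa [comp_eq hx] at h2
  obtain ⟨q, hq, hh, hl, hpar, hcq⟩ := walk hMm hNm hMc hNc hMcov hMt hNr hNcov hr
  have hsub1 : M \ edgesIn F (comp (avoid E S) u0) ⊆ E \ F := by
    rintro e ⟨heM, heN⟩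
    exact ⟨(hMsub heM).1, fun hf => heN ⟨hf, fun x hx => hMc _ heM x hx⟩⟩
  have hsub2 : edgesIn F (comp (avoid E S) u0) \ M ⊆ F := fun e he => he.1.1
  exact ⟨q, altPath_mono hsub1 hsub2 hq, hh, hl, hpar, hcq⟩

lemma truncate_at (hFm : IsMatching F) (hGE : IsGE E F Q R S)
    {w0c : V} (hw0c : w0c ∈ R) {r0 : V} (hr0c : r0 ∈ comp (avoid E S) w0c)
    (hr0u : ¬ covered (edgesIn F (comp (avoid E S) r0)) r0)
    (hr0uniq : ∀ y, y ∈ comp (avoid E S) w0c ∧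
      ¬ covered (edgesIn F (comp (avoid E S) w0c)) y → y = r0)
    {w : List V} (hw : AltPath (E \ F) F w) (hexp : ¬ covered F (w.head hw.1))
    (hm : r0 ∈ w) :
    ∃ p : List V, ∃ hp : AltPath (E \ F) F p, ¬ covered F (p.head hp.1) ∧
      p.getLast hp.1 = r0 ∧ p.length % 2 = 1 ∧
      (∀ x ∈ p, x ∈ comp (avoid E S) w0c → x = r0) ∧ (∀ x ∈ p, x ∉ Q) ∧
      (∀ x ∈ p, x ∈ w) ∧ (w.getLast hw.1 ∈ p → w.getLast hw.1 = r0) := by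
  have mst := master hFm hGE (pureK_hyp hGE) hw hexp
  obtain ⟨m, hmlt, hmeq⟩ := List.mem_iff_getElem.mp hm
  have hcompr0 : comp (avoid E S) r0 = comp (avoid E S) w0c := comp_eq hr0c
  have hr0R : r0 ∈ R := ge_comp_subset hGE hw0c hr0c
  have hmpar : m % 2 = 0 := by
    by_contra hodd
    have h2 := (mst m hmlt).2.2.1 (by omega) (by rw [hmeq]; exact hr0R)
    rw [hmeq] at h2
    exact hr0u h2
  -- index-uniqueness: any even-position representative of the component equals index m
  have key : ∀ k, ∀ hk : k < w.length, w[k]'hk ∈ comp (avoid E S) w0c → k = m ∨ m < k := by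
    intro k hk hkc
    have hkR : w[k]'hk ∈ R := ge_comp_subset hGE hw0c hkc
    obtain ⟨j, hj, hjk, hjpar, hjc, hju⟩ := (mst k hk).2.2.2 hkR
    have hjc' : w[j]'hj ∈ comp (avoid E S) w0c := by
      have := comp_eq hkc
      rw [← this]
      exact hjc
    have hju' : ¬ covered (edgesIn F (comp (avoid E S) w0c)) (w[j]'hj) := by
      rwa [comp_eq hjc'] at hju
    have hjr0 : w[j]'hj = r0 := hr0uniq _ ⟨hjc', hju'⟩
    have hjm : j = m := (hw.2.1.getElem_inj_iff).mp (hjr0.trans hmeq.symm)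
    omega
  refine ⟨w.take (m+1), altPath_take hw (by omega), ?_, ?_, by simp; omega, ?_, ?_, ?_, ?_⟩
  · have hne : w.take (m+1) ≠ [] := (altPath_take hw (by omega : 0 < m+1)).1
    have h0 : (w.take (m+1)).head hne = w.head hw.1 := by
      rw [List.head_eq_getElem_zero, List.head_eq_getElem_zero]
      exact List.getElem_take
    rw [h0]
    exact hexp
  · have hne : w.take (m+1) ≠ [] := (altPath_take hw (by omega : 0 < m+1)).1
    rw [List.getLast_eq_getElem]
    have hlen : (w.take (m+1)).length = m + 1 := by simp; omega
    have : (w.take (m+1))[(w.take (m+1)).length - 1]'(by omega) =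
        (w.take (m+1))[m]'(by omega) := by
      congr 1
      omega
    rw [this, List.getElem_take]
    exact hmeq
  · intro x hx hxc
    obtain ⟨k, hklt, hkeq⟩ := List.mem_iff_getElem.mp hx
    have hklen : (w.take (m+1)).length = m + 1 := by simp; omega
    have hkw : k < w.length := by
      have := List.length_take (l := w) (i := m+1)
      omega
    have hkeq' : w[k]'hkw = x := by rw [← hkeq, List.getElem_take]
    rcases key k hkw (by rw [hkeq']; exact hxc) with h | h
    · rw [← hkeq']
      subst h
      exact hmeq
    · omega
  · intro x hx hxQ
    have hxw : x ∈ w := List.take_subset _ _ hx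
    obtain ⟨k, hklt, hkeq⟩ := List.mem_iff_getElem.mp hxw
    exact (mst k hklt).1 (by rw [hkeq]; exact hxQ)
  · intro x hx
    exact List.take_subset _ _ hx
  · intro hlastmem
    obtain ⟨k, hklt, hkeq⟩ := List.mem_iff_getElem.mp hlastmem
    have hklen : (w.take (m+1)).length = m + 1 := by simp; omega
    have hkw : k < w.length := by omega
    have hkeq' : w[k]'hkw = w.getLast hw.1 := by rw [← hkeq, List.getElem_take]
    have hwlast : w[w.length - 1]'(by omega) = w.getLast hw.1 :=
      (List.getLast_eq_getElem hw.1).symm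
    have hkl : k = w.length - 1 :=
      (hw.2.1.getElem_inj_iff).mp (hkeq'.trans hwlast.symm)
    rw [← hmeq, ← hkeq']
    congr 1
    omega

lemma reach_r (hFm : IsMatching F) (hFE : F ⊆ E) (hGE : IsGE E F Q R S)
    (hOR : ORset (E \ F) F = S ∪ {v ∈ R | covered (edgesIn F (comp (avoid E S) v)) v})
    {u0 : V} (hu : u0 ∈ R) :
    ∃ r0, r0 ∈ comp (avoid E S) u0 ∧ ¬ covered (edgesIn F (comp (avoid E S) r0)) r0 ∧
      (∀ y, y ∈ comp (avoid E S) u0 ∧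
        ¬ covered (edgesIn F (comp (avoid E S) u0)) y → y = r0) ∧
      ∃ p : List V, ∃ hp : AltPath (E \ F) F p, ¬ covered F (p.head hp.1) ∧
        p.getLast hp.1 = r0 ∧ p.length % 2 = 1 ∧
        (∀ x ∈ p, x ∈ comp (avoid E S) u0 → x = r0) ∧ (∀ x ∈ p, x ∉ Q) := by
  obtain ⟨r0, ⟨hr0c, hr0u0⟩, hr0uniq'⟩ := (hGE.2.2.2.2.2.1 u0 hu).2.2
  have hr0uniq : ∀ y, y ∈ comp (avoid E S) u0 ∧
      ¬ covered (edgesIn F (comp (avoid E S) u0)) y → y = r0 := fun y hy => hr0uniq' y hy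
  have hr0u : ¬ covered (edgesIn F (comp (avoid E S) r0)) r0 := by
    rwa [comp_eq hr0c]
  have hr0R : r0 ∈ R := ge_comp_subset hGE hu hr0c
  refine ⟨r0, hr0c, hr0u, hr0uniq, ?_⟩
  by_cases hexp : covered F r0
  · obtain ⟨s0, hs0⟩ := covered_partner hexp
    have hs0S : s0 ∈ S := by
      rcases ge_cases hGE s0 with h | h | h
      · exact absurd (ge_Q_partner hGE hFm h (sym2_comm hs0))
          (Set.disjoint_right.mp hGE.2.1 hr0R)
      · have hE' : s(r0, s0) ∈ E := hFE hs0
        rcases ge_step hGE hr0R hE' with h2 | h2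
        · exact absurd h2 (Set.disjoint_left.mp hGE.2.2.2.1 h)
        · exfalso
          refine hr0u ⟨s(r0, s0), ⟨hs0, ?_⟩, by simp⟩
          intro x hx
          rcases Sym2.mem_iff.mp hx with rfl | rfl
          · exact comp_refl _ _
          · exact h2
      · exact h
    have hs0OR : s0 ∈ ORset (E \ F) F := by rw [hOR]; exact Or.inl hs0S
    obtain ⟨a, haexp, w0, hw0ne, hw0alt, hw0head, hw0last, hw0even⟩ := hs0OR
    have hw0exp : ¬ covered F (w0.head hw0alt.1) := by rw [hw0head]; exact haexp
    have hw0ev : w0.length % 2 = 0 := Nat.even_iff.mp hw0even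
    have hw0pos : 0 < w0.length := List.length_pos_iff.mpr hw0ne
    by_cases hmem : r0 ∈ w0
    · obtain ⟨p, hp, h1, h2, h3, h4, h5, -, -⟩ :=
        truncate_at hFm hGE hu hr0c hr0u hr0uniq hw0alt hw0exp hmem
      exact ⟨p, hp, h1, h2, h3, h4, h5⟩
    · have hsnoc : AltPath (E \ F) F (w0 ++ [r0]) := by
        refine altPath_snoc hw0alt hmem ?_
        rw [if_neg (by omega)]
        have : w0.getLast hw0alt.1 = s0 := hw0last
        rw [this]
        exact sym2_comm hs0
      have hexp' : ¬ covered F ((w0 ++ [r0]).head hsnoc.1) := by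
        rw [List.head_append_left hw0ne, hw0head]
        exact haexp
      obtain ⟨p, hp, h1, h2, h3, h4, h5, -, -⟩ :=
        truncate_at hFm hGE hu hr0c hr0u hr0uniq hsnoc hexp' (by simp)
      exact ⟨p, hp, h1, h2, h3, h4, h5⟩
  · refine ⟨[r0], altPath_singleton _ _ _, hexp, rfl, by simp, ?_, ?_⟩
    · intro x hx _
      simpa using hx
    · intro x hx hxQ
      have : x = r0 := by simpa using hx
      subst this
      exact Set.disjoint_right.mp hGE.2.1 hr0R hxQ

end Reach


section Build

variable {V : Type*} {E F : Set (Sym2 V)} {Q R S : Set V}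

lemma glue_KK {A B : Set (Sym2 V)} {p q : List V} (hp : AltPath A B p) (hq : AltPath A B q)
    (hpl : p.length % 2 = 1) (hj : q.head hq.1 = p.getLast hp.1)
    (hdisj : ∀ x ∈ q, x ∈ p → x = q.head hq.1) :
    ∃ hP : AltPath A B (p ++ q.tail),
      (p ++ q.tail).head hP.1 = p.head hp.1 ∧
      (p ++ q.tail).getLast hP.1 = q.getLast hq.1 ∧
      (p ++ q.tail).length = p.length + q.length - 1 := by
  have hqpos : 0 < q.length := List.length_pos_iff.mpr hq.1
  have hdis' : ∀ x ∈ q.tail, x ∉ p := by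
    intro x hx hxp
    have hxq : x ∈ q := List.mem_of_mem_tail hx
    have h2 := hdisj x hxq hxp
    rw [h2] at hx
    exact head_not_mem_tail hq.2.1 hq.1 hx
  have hqe : ∀ j, ∀ hjlt : j + 1 < q.length,
      s(q[j]'(Nat.lt_of_succ_lt hjlt), q[j+1]'hjlt) ∈
        (if (j + (p.length - 1)) % 2 = 0 then A else B) := by
    intro j hjlt
    have h3 := hq.2.2 j hjlt
    by_cases hc : j % 2 = 0
    · rw [if_pos hc] at h3; rw [if_pos (by omega)]; exact h3
    · rw [if_neg hc] at h3; rw [if_neg (by omega)]; exact h3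
  have hP := altPath_append_gen hp hq.1 hq.2.1 hj hdis' hqe
  refine ⟨hP, List.head_append_left hp.1, append_tail_getLast hp.1 hq.1 hj, ?_⟩
  rw [List.length_append, List.length_tail]
  omega

lemma glue_KF {A B : Set (Sym2 V)} {p q : List V} (hp : AltPath A B p) (hq : AltPath B A q)
    (hpl : p.length % 2 = 0) (hj : q.head hq.1 = p.getLast hp.1)
    (hdisj : ∀ x ∈ q, x ∈ p → x = q.head hq.1) :
    ∃ hP : AltPath A B (p ++ q.tail),
      (p ++ q.tail).head hP.1 = p.head hp.1 ∧
      (p ++ q.tail).getLast hP.1 = q.getLast hq.1 ∧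
      (p ++ q.tail).length = p.length + q.length - 1 := by
  have hqpos : 0 < q.length := List.length_pos_iff.mpr hq.1
  have hppos : 0 < p.length := List.length_pos_iff.mpr hp.1
  have hdis' : ∀ x ∈ q.tail, x ∉ p := by
    intro x hx hxp
    have hxq : x ∈ q := List.mem_of_mem_tail hx
    have h2 := hdisj x hxq hxp
    rw [h2] at hx
    exact head_not_mem_tail hq.2.1 hq.1 hx
  have hqe : ∀ j, ∀ hjlt : j + 1 < q.length,
      s(q[j]'(Nat.lt_of_succ_lt hjlt), q[j+1]'hjlt) ∈
        (if (j + (p.length - 1)) % 2 = 0 then A else B) := by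
    intro j hjlt
    have h3 := hq.2.2 j hjlt
    by_cases hc : j % 2 = 0
    · rw [if_pos hc] at h3; rw [if_neg (by omega)]; exact h3
    · rw [if_neg hc] at h3; rw [if_pos (by omega)]; exact h3
  have hP := altPath_append_gen hp hq.1 hq.2.1 hj hdis' hqe
  refine ⟨hP, List.head_append_left hp.1, append_tail_getLast hp.1 hq.1 hj, ?_⟩
  rw [List.length_append, List.length_tail]
  omega

lemma finish [Fintype V] (hFm : IsMatching F) (hGE : IsGE E F Q R S)
    {K' : Set (Sym2 V)} (hK'sub : E \ F ⊆ K') {P1 : List V} (hP1 : AltPath K' F P1)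
    (hodd : P1.length % 2 = 1) {u1 v1 : V} (hlast : P1.getLast hP1.1 = u1)
    (he' : s(u1, v1) ∈ K') (hv1 : v1 ∉ P1)
    {w0 : V} (hw0 : w0 ∈ R) (hv1c : v1 ∈ comp (avoid E S) w0)
    {r1 : V} (hr1 : r1 ∈ comp (avoid E S) w0)
    (hr1u : ¬ covered (edgesIn F (comp (avoid E S) r1)) r1)
    (hdisj : ∀ x ∈ P1, x ∉ comp (avoid E S) w0) :
    ∃ P : List V, ∃ hP : AltPath K' F P, P.head hP.1 = P1.head hP1.1 ∧
      P.getLast hP.1 = r1 ∧ P.length % 2 = 0 := by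
  have hP2 : AltPath K' F (P1 ++ [v1]) := by
    refine altPath_snoc hP1 hv1 ?_
    rw [if_pos (by omega), hlast]
    exact he'
  have hP2ne : P1 ++ [v1] ≠ [] := by simp
  have hP2last : (P1 ++ [v1]).getLast hP2ne = v1 := by
    rw [List.getLast_append_of_ne_nil _ (by simp)]; simp
  have hP2len : (P1 ++ [v1]).length = P1.length + 1 := by simp
  obtain ⟨q0, hq0, hq0h, hq0l, hq0len, hq0c⟩ := comp_even_path hFm hGE hw0 hv1c hr1 hr1u
  have hq3 : AltPath F (E \ F) q0.reverse := altPath_reverse hq0 hq0len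
  have hq3' : AltPath F K' q0.reverse := altPath_mono subset_rfl hK'sub hq3
  have hq3ne : q0.reverse ≠ [] := hq3'.1
  have hq3h : q0.reverse.head hq3ne = v1 := by rw [List.head_reverse]; exact hq0l
  have hq3l : q0.reverse.getLast hq3ne = r1 := by rw [List.getLast_reverse]; exact hq0h
  have hjunc : q0.reverse.head hq3ne = (P1 ++ [v1]).getLast hP2ne := by
    rw [hq3h, hP2last]
  have hdis : ∀ x ∈ q0.reverse, x ∈ (P1 ++ [v1]) → x = q0.reverse.head hq3ne := by
    intro x hx hxp
    have hxc : x ∈ comp (avoid E S) w0 := hq0c x (List.mem_reverse.mp hx)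
    rcases List.mem_append.mp hxp with h | h
    · exact absurd hxc (hdisj x h)
    · simp only [List.mem_singleton] at h
      rw [h, hq3h]
  obtain ⟨hP, hPh, hPl, hPlen⟩ := glue_KF hP2 hq3' (by rw [hP2len]; omega) hjunc hdis
  refine ⟨_, hP, ?_, ?_, ?_⟩
  · rw [hPh]
    exact List.head_append_left hP1.1
  · rw [hPl, hq3l]
  · rw [hPlen, hP2len, List.length_reverse]
    omega

lemma notOR_r (hGE : IsGE E F Q R S)
    (hOR : ORset (E \ F) F = S ∪ {v ∈ R | covered (edgesIn F (comp (avoid E S) v)) v})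
    {w0 r1 : V} (hw0 : w0 ∈ R) (hr1 : r1 ∈ comp (avoid E S) w0)
    (hr1u : ¬ covered (edgesIn F (comp (avoid E S) r1)) r1) :
    r1 ∉ ORset (E \ F) F := by
  rw [hOR]
  rintro (h | h)
  · exact Set.disjoint_left.mp hGE.2.2.2.1 (ge_comp_subset hGE hw0 hr1) h
  · exact hr1u h.2

lemma build_RQ [Fintype V] (hFm : IsMatching F) (hFE : F ⊆ E) (hGE : IsGE E F Q R S)
    (hOR : ORset (E \ F) F = S ∪ {v ∈ R | covered (edgesIn F (comp (avoid E S) v)) v})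
    {u v : V} (hu : u ∈ R) (hv : v ∈ Q) :
    ∃ x, x ∈ ORset (insert s(u, v) (E \ F)) F ∧ x ∉ ORset (E \ F) F := by
  obtain ⟨r0, hr0c, hr0u, hr0uniq, p, hp, hexp, hplast, hpodd, hpcap, hpQ⟩ :=
    reach_r hFm hFE hGE hOR hu
  obtain ⟨q, hq, hqh, hql, hqlen, hqc⟩ :=
    comp_even_path hFm hGE hu (comp_refl _ u) hr0c hr0u
  have hjunc : q.head hq.1 = p.getLast hp.1 := by rw [hqh, hplast]
  have hdisj : ∀ x ∈ q, x ∈ p → x = q.head hq.1 := by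
    intro x hx hxp
    rw [hqh]
    exact hpcap x hxp (hqc x hx)
  obtain ⟨hP1, hP1h, hP1l, hP1len⟩ := glue_KK hp hq hpodd hjunc hdisj
  have hvP1 : v ∉ p ++ q.tail := by
    intro hmem
    rcases mem_append_tail hmem with h | h
    · exact hpQ v h hv
    · exact Set.disjoint_left.mp hGE.2.1 hv (ge_comp_subset hGE hu (hqc v h))
  have hP1' : AltPath (insert s(u, v) (E \ F)) F (p ++ q.tail) :=
    altPath_mono (Set.subset_insert _ _) subset_rfl hP1
  have hP2 : AltPath (insert s(u, v) (E \ F)) F ((p ++ q.tail) ++ [v]) := by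
    refine altPath_snoc hP1' hvP1 ?_
    rw [if_pos (by rw [hP1len]; omega)]
    have h3 : (p ++ q.tail).getLast hP1'.1 = u := by rw [hP1l, hql]
    rw [h3]
    exact Set.mem_insert _ _
  have hlast2 : ((p ++ q.tail) ++ [v]).getLast hP2.1 = v := by
    rw [List.getLast_append_of_ne_nil _ (by simp)]; simp
  have hhead2 : ((p ++ q.tail) ++ [v]).head hP2.1 = p.head hp.1 := by
    rw [List.head_append_left hP1.1]
    exact hP1h
  refine ⟨v, ⟨((p ++ q.tail) ++ [v]).head hP2.1, by rw [hhead2]; exact hexp,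
    (p ++ q.tail) ++ [v], hP2.1, hP2, rfl, hlast2, ?_⟩, ?_⟩
  · refine Nat.even_iff.mpr ?_
    rw [List.length_append, hP1len]
    simp
    omega
  · rw [hOR]
    rintro (h | h)
    · exact Set.disjoint_left.mp hGE.2.2.1 hv h
    · exact Set.disjoint_left.mp hGE.2.1 hv h.1

lemma build_RR [Fintype V] (hFm : IsMatching F) (hFE : F ⊆ E) (hGE : IsGE E F Q R S)
    (hOR : ORset (E \ F) F = S ∪ {v ∈ R | covered (edgesIn F (comp (avoid E S) v)) v})
    {u v : V} (hu : u ∈ R) (hv : v ∈ R) (hvc : v ∉ comp (avoid E S) u) :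
    ∃ x, x ∈ ORset (insert s(u, v) (E \ F)) F ∧ x ∉ ORset (E \ F) F := by
  have hcompdisj : ∀ x, x ∈ comp (avoid E S) u → x ∈ comp (avoid E S) v → False := by
    intro x hxu hxv
    have h1 := comp_eq hxu
    have h2 := comp_eq hxv
    refine hvc ?_
    rw [← h1, h2]
    exact comp_refl _ v
  obtain ⟨r0, hr0c, hr0u, hr0uniq, p, hp, hexp, hplast, hpodd, hpcap, hpQ⟩ :=
    reach_r hFm hFE hGE hOR hu
  obtain ⟨rv, hrvc, hrvu, hrvuniq, -⟩ := reach_r hFm hFE hGE hOR hv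
  by_cases hcase : ∃ x ∈ p, x ∈ comp (avoid E S) v
  · -- the path to `comp u` meets `comp v`: truncate there and cross via `e` into `comp u`
    obtain ⟨x0, hx0p, hx0c⟩ := hcase
    have mst := master hFm hGE (pureK_hyp hGE) hp hexp
    obtain ⟨i, hilt, hieq⟩ := List.mem_iff_getElem.mp hx0p
    have hx0R : x0 ∈ R := ge_comp_subset hGE hv hx0c
    obtain ⟨j, hj, hji, hjpar, hjc, hju⟩ := (mst i hilt).2.2.2 (by rw [hieq]; exact hx0R)
    have hjcv : p[j]'hj ∈ comp (avoid E S) v := by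
      have h2 : comp (avoid E S) (p[i]'hilt) = comp (avoid E S) v := by
        rw [hieq]; exact comp_eq hx0c
      rw [← h2]
      exact hjc
    have hrvmem : rv ∈ p := by
      have hju' : ¬ covered (edgesIn F (comp (avoid E S) v)) (p[j]'hj) := by
        rwa [comp_eq hjcv] at hju
      have h3 : p[j]'hj = rv := hrvuniq _ ⟨hjcv, hju'⟩
      rw [← h3]
      exact List.getElem_mem _
    obtain ⟨A, hA, hAexp, hAlast, hAodd, hAcap, hAQ, hAsub, hAlastw⟩ :=
      truncate_at hFm hGE hv hrvc hrvu hrvuniq hp hexp hrvmem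
    have hAcu : ∀ x ∈ A, x ∉ comp (avoid E S) u := by
      intro x hx hxc
      have hxr : x = r0 := hpcap x (hAsub x hx) hxc
      have h3 : p.getLast hp.1 ∈ A := by rw [hplast, ← hxr]; exact hx
      have h4 := hAlastw h3
      rw [hplast] at h4
      exact hcompdisj r0 hr0c (h4 ▸ hrvc)
    obtain ⟨qv, hqv, hqvh, hqvl, hqvlen, hqvc⟩ :=
      comp_even_path hFm hGE hv (comp_refl _ v) hrvc hrvu
    have hjunc : qv.head hqv.1 = A.getLast hA.1 := by rw [hqvh, hAlast]
    have hdisj1 : ∀ x ∈ qv, x ∈ A → x = qv.head hqv.1 := by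
      intro x hx hxA
      rw [hqvh]
      exact hAcap x hxA (hqvc x hx)
    obtain ⟨hP1, hP1h, hP1l, hP1len⟩ := glue_KK hA hqv hAodd hjunc hdisj1
    have hP1' : AltPath (insert s(u, v) (E \ F)) F (A ++ qv.tail) :=
      altPath_mono (Set.subset_insert _ _) subset_rfl hP1
    have huP1 : u ∉ A ++ qv.tail := by
      intro hmem
      rcases mem_append_tail hmem with h | h
      · exact hAcu u h (comp_refl _ u)
      · exact hcompdisj u (comp_refl _ u) (hqvc u h)
    have he' : s(v, u) ∈ insert s(u, v) (E \ F) := by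
      rw [Sym2.eq_swap]
      exact Set.mem_insert _ _
    have hdisjP1 : ∀ x ∈ A ++ qv.tail, x ∉ comp (avoid E S) u := by
      intro x hx hxc
      rcases mem_append_tail hx with h | h
      · exact hAcu x h hxc
      · exact hcompdisj x hxc (hqvc x h)
    obtain ⟨P, hP, hPh, hPl, hPlen⟩ :=
      finish hFm hGE (Set.subset_insert _ _) hP1' (by rw [hP1len]; omega)
        (by rw [hP1l, hqvl]) he' huP1 hu (comp_refl _ u) hr0c hr0u hdisjP1
    refine ⟨r0, ⟨P.head hP.1, ?_, P, hP.1, hP, rfl, hPl, Nat.even_iff.mpr hPlen⟩, ?_⟩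
    · rw [hPh, hP1h]
      exact hAexp
    · exact notOR_r hGE hOR hu hr0c hr0u
  · push_neg at hcase
    obtain ⟨q, hq, hqh, hql, hqlen, hqc⟩ :=
      comp_even_path hFm hGE hu (comp_refl _ u) hr0c hr0u
    have hjunc : q.head hq.1 = p.getLast hp.1 := by rw [hqh, hplast]
    have hdisj1 : ∀ x ∈ q, x ∈ p → x = q.head hq.1 := by
      intro x hx hxp
      rw [hqh]
      exact hpcap x hxp (hqc x hx)
    obtain ⟨hP1, hP1h, hP1l, hP1len⟩ := glue_KK hp hq hpodd hjunc hdisj1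
    have hP1' : AltPath (insert s(u, v) (E \ F)) F (p ++ q.tail) :=
      altPath_mono (Set.subset_insert _ _) subset_rfl hP1
    have hvP1 : v ∉ p ++ q.tail := by
      intro hmem
      rcases mem_append_tail hmem with h | h
      · exact hcase v h (comp_refl _ v)
      · exact hvc (hqc v h)
    have he' : s(u, v) ∈ insert s(u, v) (E \ F) := Set.mem_insert _ _
    have hdisjP1 : ∀ x ∈ p ++ q.tail, x ∉ comp (avoid E S) v := by
      intro x hx hxc
      rcases mem_append_tail hx with h | h
      · exact hcase x h hxc
      · exact hcompdisj x (hqc x h) hxc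
    obtain ⟨P, hP, hPh, hPl, hPlen⟩ :=
      finish hFm hGE (Set.subset_insert _ _) hP1' (by rw [hP1len]; omega)
        (by rw [hP1l, hql]) he' hvP1 hv (comp_refl _ v) hrvc hrvu hdisjP1
    refine ⟨rv, ⟨P.head hP.1, ?_, P, hP.1, hP, rfl, hPl, Nat.even_iff.mpr hPlen⟩, ?_⟩
    · rw [hPh, hP1h]
      exact hexp
    · exact notOR_r hGE hOR hv hrvc hrvu

end Build


/-- given a Gallai–Edmonds decomposition `(Q,R,S)` for the maximum matching `F`
satisfying `OR(K,F) = S ∪ ⋃ (V(H_i) \ {r_i})` with `K = E \ F`, a non-edge `uv` of `G` is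
enriching (adding it strictly enlarges `OR`) iff it joins two distinct components of `G − S`
inside `R`, or joins a component of `R` to `Q`. -/
theorem stmt_14 {V : Type*} [Fintype V] (E F : Set (Sym2 V)) (Q R S : Set V)
    (hE : ∀ e ∈ E, ¬ e.IsDiag) (hF : IsMaxMatching E F) (hGE : IsGE E F Q R S)
    (hOR : ORset (E \ F) F = S ∪ {v ∈ R | covered (edgesIn F (comp (avoid E S) v)) v})
    (u v : V) (huv : u ≠ v) (hnotE : s(u, v) ∉ E) :
    ORset (E \ F) F ⊂ ORset (insert s(u, v) (E \ F)) F ↔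
      ((u ∈ R ∧ v ∈ R ∧ v ∉ comp (avoid E S) u) ∨ (u ∈ R ∧ v ∈ Q) ∨ (u ∈ Q ∧ v ∈ R)) := by
  classical
  constructor
  · intro hss
    by_contra hRHS
    -- In the "bad" cases, the extra edge respects the master invariant, so nothing new
    -- becomes oddly reachable.
    have hK'' : ∀ a b : V, s(a, b) ∈ insert s(u, v) (E \ F) → a ∈ R →
        b ∈ S ∨ b ∈ comp (avoid E S) a := by
      intro a b hab haR
      rcases Set.mem_insert_iff.mp hab with heq | hEF
      · rcases Sym2.eq_iff.mp heq with ⟨hau, hbv⟩ | ⟨hav, hbu⟩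
        · subst hau; subst hbv
          rcases ge_cases hGE b with hbQ | hbR | hbS
          · exact absurd (Or.inr (Or.inl ⟨haR, hbQ⟩)) hRHS
          · by_cases hbc : b ∈ comp (avoid E S) a
            · exact Or.inr hbc
            · exact absurd (Or.inl ⟨haR, hbR, hbc⟩) hRHS
          · exact Or.inl hbS
        · subst hav; subst hbu
          rcases ge_cases hGE b with hbQ | hbR | hbS
          · exact absurd (Or.inr (Or.inr ⟨hbQ, haR⟩)) hRHS
          · by_cases hbc : a ∈ comp (avoid E S) b
            · exact Or.inr (comp_symm hbc)
            · exact absurd (Or.inl ⟨hbR, haR, hbc⟩) hRHS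
          · exact Or.inl hbS
      · exact ge_step hGE haR hEF.1
    have hsubset : ORset (insert s(u, v) (E \ F)) F ⊆ ORset (E \ F) F := by
      intro x hx
      obtain ⟨a, haexp, w, hwne, hwalt, hwh, hwl, hweven⟩ := hx
      have mst := master hF.2.1 hGE hK'' hwalt (by rw [hwh]; exact haexp)
      have hlen : w.length % 2 = 0 := Nat.even_iff.mp hweven
      have hpos : 0 < w.length := List.length_pos_iff.mpr hwne
      have hlast : w[w.length - 1]'(by omega) = x := by
        rw [← hwl, List.getLast_eq_getElem]
      obtain ⟨hA', hB', hC', hD'⟩ := mst (w.length - 1) (by omega)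
      rw [hOR]
      rcases ge_cases hGE x with hxQ | hxR | hxS
      · exact absurd (by rw [hlast]; exact hxQ) hA'
      · right
        refine ⟨hxR, ?_⟩
        have h5 := hC' (by omega) (by rw [hlast]; exact hxR)
        rwa [hlast] at h5
      · exact Or.inl hxS
    exact hss.not_subset hsubset
  · intro hRHS
    have hmono : ORset (E \ F) F ⊆ ORset (insert s(u, v) (E \ F)) F := by
      rintro x ⟨a, ha, pp, hne, halt, hh, hl, he⟩
      exact ⟨a, ha, pp, hne,
        altPath_mono (Set.subset_insert _ _) subset_rfl halt, hh, hl, he⟩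
    have hwit : ∃ x, x ∈ ORset (insert s(u, v) (E \ F)) F ∧ x ∉ ORset (E \ F) F := by
      rcases hRHS with ⟨hu, hv, hvc⟩ | ⟨hu, hv⟩ | ⟨hu, hv⟩
      · exact build_RR hF.2.1 hF.1 hGE hOR hu hv hvc
      · exact build_RQ hF.2.1 hF.1 hGE hOR hu hv
      · have h := build_RQ hF.2.1 hF.1 hGE hOR hv hu
        rwa [Sym2.eq_swap] at h
    obtain ⟨x, hx1, hx2⟩ := hwit
    exact (Set.ssubset_iff_of_subset hmono).mpr ⟨x, hx1, hx2⟩
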